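/- For all integers d ≥ 0 and 0 ≤ j ≤ d, the number of permutations σ of {1, ..., d+2} with exactly one descent and σ(1) = j+2 equals 2^{d-j}; that is, h^{(d)}_{0,j} = A(d+2, 1, j+2) = 2^{d-j}. -/

import Mathlib

/-- Number of descents of a permutation of `Fin m`. -/
def des {m : ℕ} (σ : Equiv.Perm (Fin m)) : ℕ :=
  (Finset.univ.filter fun p : Fin m × Fin m =>
    (p.1 : ℕ) + 1 = (p.2 : ℕ) ∧ σ p.2 < σ p.1).card

/-- `Anum m i1 j`: the number of permutations `σ` of `[m] = {1,…,m}` (modelled as `Fin m`,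
value `v` standing for `v+1`) with `des σ + 1 = i1` (i.e. `des σ = i1 - 1`) and `σ(1) = j`. -/
def Anum (m i1 j : ℕ) : ℕ :=
  (Finset.univ.filter fun σ : Equiv.Perm (Fin m) =>
    des σ + 1 = i1 ∧ ∃ h : 0 < m, ((σ ⟨0, h⟩ : ℕ) + 1 = j)).card

namespace Stmt12Aux

open Finset

variable {m : ℕ}

lemma card_compl_fin (s : Finset (Fin m)) : sᶜ.card = m - s.card := by
  simp [Finset.card_compl]

/-- The permutation (as a function) whose first `s.card` values are `s` in increasing
order and remaining values are `sᶜ` in increasing order. -/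
def fpos (s : Finset (Fin m)) (i : Fin m) : Fin m :=
  if h : (i : ℕ) < s.card then
    s.orderEmbOfFin rfl ⟨i, h⟩
  else
    sᶜ.orderEmbOfFin (card_compl_fin s) ⟨(i : ℕ) - s.card, by
      have := i.isLt; omega⟩

lemma fpos_of_lt (s : Finset (Fin m)) (i : Fin m) (h : (i : ℕ) < s.card) :
    fpos s i = s.orderEmbOfFin rfl ⟨i, h⟩ := dif_pos h

lemma fpos_of_ge (s : Finset (Fin m)) (i : Fin m) (h : ¬ (i : ℕ) < s.card) :
    fpos s i = sᶜ.orderEmbOfFin (card_compl_fin s)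
      ⟨(i : ℕ) - s.card, by have := i.isLt; omega⟩ := dif_neg h

lemma fpos_mem (s : Finset (Fin m)) (i : Fin m) :
    fpos s i ∈ s ↔ (i : ℕ) < s.card := by
  by_cases h : (i : ℕ) < s.card
  · simp [fpos_of_lt s i h, h]
  · rw [fpos_of_ge s i h]
    have := Finset.orderEmbOfFin_mem sᶜ (card_compl_fin s)
      ⟨(i : ℕ) - s.card, by have := i.isLt; omega⟩
    rw [Finset.mem_compl] at this
    simp [this, h]

lemma fpos_injective (s : Finset (Fin m)) : Function.Injective (fpos s) := by
  intro i i' hii'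
  by_cases h : (i : ℕ) < s.card <;> by_cases h' : (i' : ℕ) < s.card
  · rw [fpos_of_lt s i h, fpos_of_lt s i' h'] at hii'
    have := (s.orderEmbOfFin rfl).injective hii'
    simp only [Fin.mk.injEq] at this
    exact Fin.ext this
  · exfalso
    have h1 := (fpos_mem s i).2 h
    rw [hii'] at h1
    exact h' ((fpos_mem s i').1 h1)
  · exfalso
    have h1 := (fpos_mem s i').2 h'
    rw [← hii'] at h1
    exact h ((fpos_mem s i).1 h1)
  · rw [fpos_of_ge s i h, fpos_of_ge s i' h'] at hii'
    have h2 := (sᶜ.orderEmbOfFin (card_compl_fin s)).injective hii'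
    simp only [Fin.mk.injEq] at h2
    exact Fin.ext (by omega)

/-- The permutation whose first `s.card` values are `s` in increasing order. -/
noncomputable def Fperm (s : Finset (Fin m)) : Equiv.Perm (Fin m) :=
  Equiv.ofBijective (fpos s) (Finite.injective_iff_bijective.mp (fpos_injective s))

lemma Fperm_apply (s : Finset (Fin m)) (i : Fin m) : Fperm s i = fpos s i := rfl

lemma fpos_lt_left (s : Finset (Fin m)) (i i' : Fin m)
    (h : (i : ℕ) < (i' : ℕ)) (h' : (i' : ℕ) < s.card) :
    fpos s i < fpos s i' := by
  rw [fpos_of_lt s i (h.trans h'), fpos_of_lt s i' h']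
  exact (s.orderEmbOfFin rfl).strictMono (show ((⟨i, _⟩ : Fin s.card)) < ⟨i', h'⟩ from h)

lemma fpos_lt_right (s : Finset (Fin m)) (i i' : Fin m)
    (h : s.card ≤ (i : ℕ)) (h' : (i : ℕ) < (i' : ℕ)) :
    fpos s i < fpos s i' := by
  rw [fpos_of_ge s i (by omega), fpos_of_ge s i' (by omega)]
  exact (sᶜ.orderEmbOfFin (card_compl_fin s)).strictMono
    (show ((⟨(i:ℕ) - s.card, _⟩ : Fin (m - s.card))) < ⟨(i':ℕ) - s.card, _⟩ by
      simp only [Fin.mk_lt_mk]; omega)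

lemma fpos_zero (s : Finset (Fin m)) (hc : 0 < s.card) (hm : 0 < m) :
    fpos s ⟨0, hm⟩ = s.min' (Finset.card_pos.mp hc) := by
  rw [fpos_of_lt s ⟨0, hm⟩ hc]
  exact Finset.orderEmbOfFin_zero rfl hc

lemma fpos_card (s : Finset (Fin m)) (hc : s.card < m) :
    fpos s ⟨s.card, hc⟩ = sᶜ.min' (Finset.card_pos.mp (by rw [card_compl_fin]; omega)) := by
  rw [fpos_of_ge s ⟨s.card, hc⟩ (by simp)]
  have h0 : 0 < m - s.card := by omega
  have : (⟨(↑(⟨s.card, hc⟩ : Fin m) : ℕ) - s.card, by have := hc; omega⟩ : Fin (m - s.card))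
      = ⟨0, h0⟩ := by simp
  rw [this]
  exact Finset.orderEmbOfFin_zero (card_compl_fin s) h0

/-- A permutation which takes values in `s` exactly on the first `s.card` positions
and is increasing on each of the two blocks equals `fpos s`. -/
lemma eq_fpos (s : Finset (Fin m)) (σ : Equiv.Perm (Fin m))
    (hmem : ∀ i : Fin m, σ i ∈ s ↔ (i : ℕ) < s.card)
    (hmono1 : ∀ i i' : Fin m, (i : ℕ) < (i' : ℕ) → (i' : ℕ) < s.card → σ i < σ i')
    (hmono2 : ∀ i i' : Fin m, s.card ≤ (i : ℕ) → (i : ℕ) < (i' : ℕ) → σ i < σ i') :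
    ∀ i, σ i = fpos s i := by
  have hcm : s.card ≤ m := by
    simpa using s.card_le_univ
  set g1 : Fin s.card → Fin m := fun k => σ ⟨(k : ℕ), lt_of_lt_of_le k.2 hcm⟩ with hg1def
  have hg1 : g1 = s.orderEmbOfFin rfl := by
    apply Finset.orderEmbOfFin_unique rfl
    · intro k; rw [hmem]; exact k.2
    · intro k k' hkk'
      exact hmono1 _ _ hkk' k'.2
  set g2 : Fin (m - s.card) → Fin m := fun k => σ ⟨(k : ℕ) + s.card, by have := k.2; omega⟩
    with hg2def
  have hg2 : g2 = sᶜ.orderEmbOfFin (card_compl_fin s) := by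
    apply Finset.orderEmbOfFin_unique
    · intro k
      rw [Finset.mem_compl, hmem]
      simp
    · intro k k' hkk'
      exact hmono2 _ _ (by simp) (by simpa using hkk')
  intro i
  by_cases h : (i : ℕ) < s.card
  · rw [fpos_of_lt s i h, ← hg1]
  · rw [fpos_of_ge s i h, ← hg2]
    show σ _ = σ _
    exact congrArg σ (Fin.ext (by have := i.isLt; simp; omega))

end Stmt12Aux


namespace Stmt12Aux

variable {m : ℕ}

lemma des_Fperm (s : Finset (Fin m)) (h0 : 0 < s.card) (h1 : s.card < m)
    (hz : (⟨0, by omega⟩ : Fin m) ∉ s) : des (Fperm s) = 1 := by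
  have hm : 0 < m := by omega
  have key : Fperm s ⟨s.card, h1⟩ = ⟨0, hm⟩ := by
    rw [Fperm_apply, fpos_card s h1]
    apply le_antisymm (Finset.min'_le _ _ (Finset.mem_compl.2 hz))
    apply Finset.le_min'
    intro y _
    exact Fin.mk_le_of_le_val (Nat.zero_le _)
  unfold des
  have hfe : (Finset.univ.filter fun p : Fin m × Fin m =>
      (p.1 : ℕ) + 1 = (p.2 : ℕ) ∧ Fperm s p.2 < Fperm s p.1)
      = {(⟨s.card - 1, by omega⟩, ⟨s.card, h1⟩)} := by
    ext p
    obtain ⟨p1, p2⟩ := p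
    simp only [Finset.mem_filter, Finset.mem_univ, true_and, Finset.mem_singleton,
      Prod.mk.injEq]
    constructor
    · rintro ⟨hadj, hdesc⟩
      rcases lt_trichotomy ((p2 : ℕ)) s.card with hlt | heq | hgt
      · exact absurd hdesc (not_lt.2 (le_of_lt (fpos_lt_left s p1 p2 (by omega) hlt)))
      · refine ⟨Fin.ext ?_, Fin.ext ?_⟩
        · show (p1 : ℕ) = s.card - 1; omega
        · show (p2 : ℕ) = s.card; omega
      · exact absurd hdesc (not_lt.2 (le_of_lt (fpos_lt_right s p1 p2 (by omega) (by omega))))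
    · rintro ⟨rfl, rfl⟩
      refine ⟨show s.card - 1 + 1 = s.card by omega, ?_⟩
      rw [key]
      have hmem : Fperm s ⟨s.card - 1, by omega⟩ ∈ s :=
        (fpos_mem s _).2 (show s.card - 1 < s.card by omega)
      have : Fperm s ⟨s.card - 1, by omega⟩ ≠ ⟨0, hm⟩ := by
        intro h; rw [h] at hmem; exact hz hmem
      rw [Fin.lt_def]
      have h9 : (Fperm s ⟨s.card - 1, by omega⟩ : ℕ) ≠ 0 := fun h => this (Fin.ext h)
      exact Nat.pos_of_ne_zero h9
  rw [hfe, Finset.card_singleton]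

end Stmt12Aux

open Stmt12Aux Finset in
/-- `h^{(d)}_{0,j} = A(d+2, 1, j+2) = 2^{d-j}`: the number of permutations of `{1,…,d+2}`
with exactly one descent and first value `j+2` is `2^{d-j}`, for `0 ≤ j ≤ d`. -/
theorem stmt12 (d j : ℕ) (hj : j ≤ d) : Anum (d + 2) 2 (j + 2) = 2 ^ (d - j) := by
  classical
  have h02 : 0 < d + 2 := by omega
  set a : Fin (d + 2) := ⟨j + 1, by omega⟩ with ha
  have hIoi : (Finset.Ioi a).card = d - j := by
    rw [Fin.card_Ioi]; simp [ha]
  -- rewrite the counted set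
  have hstep : Anum (d + 2) 2 (j + 2)
      = (Finset.univ.filter fun σ : Equiv.Perm (Fin (d + 2)) =>
          des σ = 1 ∧ σ ⟨0, h02⟩ = a).card := by
    unfold Anum
    congr 1
    apply Finset.filter_congr
    intro σ _
    constructor
    · rintro ⟨h1, h, h2⟩
      have h2' : (σ ⟨0, h02⟩ : ℕ) + 1 = j + 2 := h2
      refine ⟨by omega, Fin.ext ?_⟩
      show (σ ⟨0, h02⟩ : ℕ) = j + 1
      omega
    · rintro ⟨h1, h2⟩
      exact ⟨by omega, h02, by rw [h2]⟩
  rw [hstep]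
  -- facts about `insert a T` for `T ⊆ Ioi a`
  have hfacts : ∀ T : Finset (Fin (d + 2)), T ⊆ Finset.Ioi a →
      ((insert a T).card = T.card + 1 ∧ (insert a T).card < d + 2 ∧
        (⟨0, h02⟩ : Fin (d + 2)) ∉ insert a T) := by
    intro T hT
    have haT : a ∉ T := fun h => absurd (Finset.mem_Ioi.1 (hT h)) (lt_irrefl a)
    have hc1 : (insert a T).card = T.card + 1 := Finset.card_insert_of_notMem haT
    have hc2 : T.card ≤ d - j := hIoi ▸ Finset.card_le_card hT
    refine ⟨hc1, by omega, ?_⟩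
    intro h
    rcases Finset.mem_insert.1 h with h | h
    · have : (0 : ℕ) = j + 1 := congrArg Fin.val h
      omega
    · have := Finset.mem_Ioi.1 (hT h)
      rw [Fin.lt_def] at this
      simp [ha] at this
  have hcount : (Finset.univ.filter fun σ : Equiv.Perm (Fin (d + 2)) =>
          des σ = 1 ∧ σ ⟨0, h02⟩ = a).card = ((Finset.Ioi a).powerset).card := by
    apply Finset.card_nbij'
      (i := fun σ => (Finset.Ioi a).filter fun v => σ.symm v < σ.symm ⟨0, h02⟩)
      (j := fun T => Fperm (insert a T))
    -- hi : maps into powerset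
    · intro σ _
      exact Finset.mem_powerset.2 (Finset.filter_subset _ _)
    -- hj : maps into the permutation set
    · intro T hT
      rw [Finset.mem_coe, Finset.mem_powerset] at hT
      obtain ⟨hc1, hc2, hz⟩ := hfacts T hT
      rw [Finset.mem_coe, Finset.mem_filter]
      refine ⟨Finset.mem_univ _, des_Fperm _ (by omega) hc2 hz, ?_⟩
      rw [Fperm_apply, fpos_zero _ (by omega) h02]
      apply le_antisymm (Finset.min'_le _ _ (Finset.mem_insert_self a T))
      apply Finset.le_min'
      intro y hy
      rcases Finset.mem_insert.1 hy with h | h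
      · exact h ▸ le_refl a
      · exact (Finset.mem_Ioi.1 (hT h)).le
    -- left inverse : the structure theorem
    · intro σ hσ
      obtain ⟨-, hdes, hσ0⟩ := Finset.mem_filter.1 hσ
      unfold des at hdes
      obtain ⟨p0, hp0⟩ := Finset.card_eq_one.mp hdes
      obtain ⟨⟨q, hql⟩, ⟨q2, hq2l⟩⟩ := p0
      have hp0mem := hp0 ▸ Finset.mem_singleton_self _
      obtain ⟨-, hadj, hdesc⟩ := Finset.mem_filter.1 hp0mem
      simp only at hadj hdesc
      have hq2 : q2 = q + 1 := hadj.symm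
      subst hq2
      -- ascent away from the descent position
      have asc : ∀ (i : ℕ) (h : i + 1 < d + 2), i ≠ q →
          σ ⟨i, by omega⟩ < σ ⟨i + 1, h⟩ := by
        intro i h hne
        have hnotmem : (⟨⟨i, by omega⟩, ⟨i + 1, h⟩⟩ : Fin (d + 2) × Fin (d + 2)) ∉
            (Finset.univ.filter fun p : Fin (d + 2) × Fin (d + 2) =>
              (p.1 : ℕ) + 1 = (p.2 : ℕ) ∧ σ p.2 < σ p.1) := by
          rw [hp0]
          simp only [Finset.mem_singleton, Prod.mk.injEq, Fin.mk.injEq]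
          rintro ⟨h1, -⟩
          exact hne h1
        have h1 : ¬ σ ⟨i + 1, h⟩ < σ ⟨i, by omega⟩ := fun hd =>
          hnotmem (Finset.mem_filter.2 ⟨Finset.mem_univ _, rfl, hd⟩)
        have hne2 : σ ⟨i, by omega⟩ ≠ σ ⟨i + 1, h⟩ := by
          intro e
          have := σ.injective e
          simp only [Fin.mk.injEq] at this
          omega
        exact lt_of_le_of_ne (not_lt.1 h1) hne2
      -- monotone on the first block
      have mono1 : ∀ (k : ℕ) (hk : k < d + 2), k ≤ q → ∀ (l : ℕ) (hl : l < k),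
          σ ⟨l, by omega⟩ < σ ⟨k, hk⟩ := by
        intro k
        induction k with
        | zero => intro _ _ l hl; omega
        | succ n ih =>
          intro hk hkq l hl
          have hstep := asc n hk (by omega)
          rcases Nat.lt_or_ge l n with h | h
          · exact lt_trans (ih (by omega) (by omega) l h) hstep
          · have : l = n := by omega
            subst this; exact hstep
      -- monotone on the second block
      have mono2 : ∀ (k : ℕ) (hk : k < d + 2), ∀ (l : ℕ) (hl1 : q + 1 ≤ l) (hl2 : l < k),
          σ ⟨l, by omega⟩ < σ ⟨k, hk⟩ := by
        intro k
        induction k with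
        | zero => intro l _ hl; omega
        | succ n ih =>
          intro hk l hlq hl
          have hstep := asc n hk (by omega)
          rcases Nat.lt_or_ge l n with h | h
          · exact lt_trans (ih (by omega) l hlq h) hstep
          · have : l = n := by omega
            subst this; exact hstep
      have hqlt : q + 1 < d + 2 := hq2l
      -- position of the value 0
      have hz0 : σ ⟨q + 1, hqlt⟩ = ⟨0, h02⟩ := by
        set p := σ.symm ⟨0, h02⟩ with hpdef
        have hp : σ p = ⟨0, h02⟩ := σ.apply_symm_apply _
        rcases lt_trichotomy (p : ℕ) (q + 1) with hlt | heq | hgt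
        · exfalso
          rcases Nat.eq_zero_or_pos (p : ℕ) with h0 | h0
          · have : p = ⟨0, h02⟩ := Fin.ext h0
            rw [this, hσ0] at hp
            have : j + 1 = 0 := congrArg Fin.val hp
            omega
          · have := mono1 (p : ℕ) p.isLt (by omega) 0 h0
            rw [Fin.eta] at this
            rw [hp] at this
            rw [Fin.lt_def] at this
            simp at this
        · have : p = ⟨q + 1, hqlt⟩ := Fin.ext heq
          rw [← this]; exact hp
        · exfalso
          have := mono2 (p : ℕ) p.isLt (q + 1) (le_refl _) hgt
          rw [Fin.eta, hp, Fin.lt_def] at this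
          simp at this
      have hsymm0 : σ.symm ⟨0, h02⟩ = ⟨q + 1, hqlt⟩ := by
        rw [← hz0, Equiv.symm_apply_apply]
      set T := (Finset.Ioi a).filter fun v => σ.symm v < σ.symm ⟨0, h02⟩ with hTdef
      -- membership characterization
      have hchar : ∀ i : Fin (d + 2), σ i ∈ insert a T ↔ (i : ℕ) < q + 1 := by
        intro i
        rw [Finset.mem_insert, hTdef, Finset.mem_filter, Finset.mem_Ioi,
          Equiv.symm_apply_apply, hsymm0]
        constructor
        · rintro (h | ⟨h1, h2⟩)
          · have : i = ⟨0, h02⟩ := σ.injective (h.trans hσ0.symm)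
            rw [this]; exact Nat.succ_pos q
          · rw [Fin.lt_def] at h2; exact h2
        · intro h
          rcases Nat.eq_zero_or_pos (i : ℕ) with h0 | h0
          · left
            have : i = ⟨0, h02⟩ := Fin.ext h0
            rw [this, hσ0]
          · right
            refine ⟨?_, by rw [Fin.lt_def]; exact h⟩
            have := mono1 (i : ℕ) i.isLt (by omega) 0 h0
            rw [Fin.eta] at this
            rw [← hσ0]; exact this
      -- cardinality of the first block
      have hcard : (insert a T).card = q + 1 := by
        have himg : insert a T
            = Finset.image σ (Finset.univ.filter fun i : Fin (d + 2) => (i : ℕ) < q + 1) := by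
          ext v
          simp only [Finset.mem_image, Finset.mem_filter, Finset.mem_univ, true_and]
          constructor
          · intro hv
            refine ⟨σ.symm v, ?_, σ.apply_symm_apply v⟩
            rw [← hchar (σ.symm v), σ.apply_symm_apply]
            exact hv
          · rintro ⟨i, hi, rfl⟩
            exact (hchar i).2 hi
        rw [himg, Finset.card_image_of_injective _ σ.injective]
        have : (Finset.univ.filter fun i : Fin (d + 2) => (i : ℕ) < q + 1)
            = Finset.Iio ⟨q + 1, hqlt⟩ := by
          ext i; simp [Fin.lt_def]
        rw [this, Fin.card_Iio]
      -- conclude by uniqueness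
      apply Equiv.ext
      intro i
      rw [Fperm_apply]
      refine (eq_fpos (insert a T) σ (fun i => by rw [hcard]; exact hchar i) ?_ ?_ i).symm
      · intro i i' h h'
        rw [hcard] at h'
        have := mono1 (i' : ℕ) i'.isLt (by omega) (i : ℕ) h
        rwa [Fin.eta, Fin.eta] at this
      · intro i i' h h'
        rw [hcard] at h
        have := mono2 (i' : ℕ) i'.isLt (i : ℕ) h h'
        rwa [Fin.eta, Fin.eta] at this
    -- right inverse
    · intro T hT
      rw [Finset.mem_coe, Finset.mem_powerset] at hT
      obtain ⟨hc1, hc2, hz⟩ := hfacts T hT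
      have key : Fperm (insert a T) ⟨(insert a T).card, hc2⟩ = ⟨0, h02⟩ := by
        rw [Fperm_apply, fpos_card _ hc2]
        apply le_antisymm (Finset.min'_le _ _ (Finset.mem_compl.2 hz))
        apply Finset.le_min'
        intro y _
        exact Fin.mk_le_of_le_val (Nat.zero_le _)
      have hsymm : (Fperm (insert a T)).symm ⟨0, h02⟩ = ⟨(insert a T).card, hc2⟩ := by
        rw [← key, Equiv.symm_apply_apply]
      ext v
      simp only [Finset.mem_filter, Finset.mem_Ioi]
      constructor
      · rintro ⟨h1, h2⟩
        rw [hsymm, Fin.lt_def] at h2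
        have hv : v ∈ insert a T := by
          have happ : Fperm (insert a T) ((Fperm (insert a T)).symm v) = v :=
            (Fperm (insert a T)).apply_symm_apply v
          rw [← happ]
          rw [Fperm_apply, fpos_mem]
          exact h2
        rcases Finset.mem_insert.1 hv with h | h
        · exact absurd (h ▸ h1) (lt_irrefl a)
        · exact h
      · intro hv
        refine ⟨Finset.mem_Ioi.1 (hT hv), ?_⟩
        rw [hsymm, Fin.lt_def]
        have happ : Fperm (insert a T) ((Fperm (insert a T)).symm v) ∈ insert a T := by
          rw [(Fperm (insert a T)).apply_symm_apply]
          exact Finset.mem_insert_of_mem hv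
        rw [Fperm_apply, fpos_mem] at happ
        exact happ
  rw [hcount, Finset.card_powerset, hIoi]
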